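/- A closely connected GR-unitary colligation that is neither strictly closely connected nor shifted strictly closely connected: let P_1, P_2, A, B, C be the matrices of the GR-unitary realization of z_1 z_2 given in the context, and for z = (z_1, z_2) ∈ ℂ² set Z(z) := z_1 P_1 + z_2 P_2 and, when z_1 z_2 ≠ 0, W(z) := z_1^{-1} P_1 + z_2^{-1} P_2. Then: (i) the four vectors P_1 B, P_2 B, A P_1 B and C^T span ℂ^4 (so the colligation is closely connected); (ii) {h ∈ ℂ^4 : C (Z(z)A)^n h = 0 for all z ∈ ℂ² and all n ∈ ℕ} ∩ {h ∈ ℂ^4 : B^T W(z) (A^T W(z))^n h = 0 for all z ∈ ℂ² with z_1 z_2 ≠ 0 and all n ∈ ℕ} = ℂ·(0,0,1,0)^T, which is nonzero, so the colligation is not strictly closely connected; (iii) {h ∈ ℂ^4 : C (Z(z)A)^n Z(z) h = 0 for all z ∈ ℂ² and all n ∈ ℕ} ∩ {h ∈ ℂ^4 : B^T (Z(z) A^T)^n h = 0 for all z ∈ ℂ² and all n ∈ ℕ} = ℂ·(1,−1,0,0)^T, which is nonzero, so the colligation is not shifted strictly closely connected. -/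

import Mathlib

open scoped Matrix

noncomputable section

set_option maxHeartbeats 1000000

/-- `P₁`. -/
def P1 : Matrix (Fin 4) (Fin 4) ℂ :=
  !![1, 0, 0, 0; 0, 0, 0, 0; 0, 0, 1/2, 1/2; 0, 0, 1/2, 1/2]

/-- `P₂`. -/
def P2 : Matrix (Fin 4) (Fin 4) ℂ :=
  !![0, 0, 0, 0; 0, 1, 0, 0; 0, 0, 1/2, -(1/2); 0, 0, -(1/2), 1/2]

/-- `A = (1/√2)·[[0,0,−1,0],[0,0,1,0],[−1,1,0,0],[1,1,0,0]]`. -/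
def Am : Matrix (Fin 4) (Fin 4) ℂ :=
  ((Real.sqrt 2 : ℂ))⁻¹ • !![0, 0, -1, 0; 0, 0, 1, 0; -1, 1, 0, 0; 1, 1, 0, 0]

/-- `B = (1/√2)·(1,1,0,0)ᵀ` as a 4×1 column. -/
def Bm : Matrix (Fin 4) (Fin 1) ℂ :=
  ((Real.sqrt 2 : ℂ))⁻¹ • !![1; 1; 0; 0]

/-- `C = (0,0,0,1)` as a 1×4 row. -/
def Cm : Matrix (Fin 1) (Fin 4) ℂ := !![0, 0, 0, 1]

/-- The column `B` as a vector in `ℂ⁴`. -/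
def Bvec : Fin 4 → ℂ := fun i => Bm i 0

/-- The row `C` (i.e. `Cᵀ`) as a vector in `ℂ⁴`. -/
def Cvec : Fin 4 → ℂ := fun i => Cm 0 i

/-- `Z(z) = z₁ P₁ + z₂ P₂`. -/
def Zm (z1 z2 : ℂ) : Matrix (Fin 4) (Fin 4) ℂ := z1 • P1 + z2 • P2

/-- `W(z) = z₁⁻¹ P₁ + z₂⁻¹ P₂`. -/
def Wm (z1 z2 : ℂ) : Matrix (Fin 4) (Fin 4) ℂ := z1⁻¹ • P1 + z2⁻¹ • P2

lemma sqrt2_ne : ((Real.sqrt 2 : ℝ) : ℂ) ≠ 0 := by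
  norm_cast
  positivity

lemma sqrt2_inv_ne : (((Real.sqrt 2 : ℝ) : ℂ))⁻¹ ≠ 0 := inv_ne_zero sqrt2_ne

lemma sqrt2_mul_self : ((Real.sqrt 2 : ℝ) : ℂ) * ((Real.sqrt 2 : ℝ) : ℂ) = 2 := by
  have h : Real.sqrt 2 * Real.sqrt 2 = 2 := Real.mul_self_sqrt (by norm_num)
  exact_mod_cast h

lemma sqrt2_inv_mul_inv :
    (((Real.sqrt 2 : ℝ) : ℂ))⁻¹ * (((Real.sqrt 2 : ℝ) : ℂ))⁻¹ = (2 : ℂ)⁻¹ := by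
  rw [← mul_inv, sqrt2_mul_self]

lemma Amt : Amᵀ = ((Real.sqrt 2 : ℂ))⁻¹ • !![0, 0, -1, 1; 0, 0, 1, 1; -1, 1, 0, 0; 0, 0, 0, 0] := by
  ext i j
  fin_cases i <;> fin_cases j <;>
    simp [Am, Matrix.vecHead, Matrix.vecTail, Function.comp]

lemma Bmt : Bmᵀ = ((Real.sqrt 2 : ℂ))⁻¹ • !![1, 1, 0, 0] := by
  ext i j
  fin_cases i <;> fin_cases j <;>
    simp [Bm, Matrix.vecHead, Matrix.vecTail, Function.comp]

lemma L1 (z1 z2 : ℂ) : Cm * Zm z1 z2 * Am * Zm z1 z2 * Am = 0 := by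
  ext i j
  fin_cases i <;> fin_cases j <;>
    simp [-mul_eq_zero, Cm, Zm, Am, P1, P2, Matrix.mul_apply, Fin.sum_univ_succ] <;> ring

lemma L2 (z1 z2 : ℂ) : Bmᵀ * Zm z1 z2 * Amᵀ * Zm z1 z2 * Amᵀ * Zm z1 z2 = 0 := by
  rw [Amt, Bmt]
  ext i j
  fin_cases i <;> fin_cases j <;>
    simp [-mul_eq_zero, Zm, P1, P2, Matrix.mul_apply, Fin.sum_univ_succ] <;> ring

lemma L4 (z1 z2 : ℂ) : Bmᵀ * Zm z1 z2 * Amᵀ * Zm z1 z2 * Amᵀ = 0 := by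
  rw [Amt, Bmt]
  ext i j
  fin_cases i <;> fin_cases j <;>
    simp [-mul_eq_zero, Zm, P1, P2, Matrix.mul_apply, Fin.sum_univ_succ] <;> ring

lemma key1 (c z1 z2 : ℂ) (n : ℕ) :
    Cm.mulVec (((Zm z1 z2 * Am) ^ n).mulVec (c • ![0, 0, 1, 0])) = 0 := by
  match n with
  | 0 =>
    rw [pow_zero, Matrix.one_mulVec]
    funext i
    fin_cases i <;>
      simp [Cm, Matrix.mulVec, dotProduct, Fin.sum_univ_succ]
  | 1 =>
    rw [pow_one]
    funext i
    fin_cases i <;>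
      simp [-mul_eq_zero, Cm, Zm, Am, P1, P2, Matrix.mulVec, Matrix.mul_apply,
        dotProduct, Fin.sum_univ_succ] <;> ring
  | (n + 2) =>
    rw [show n + 2 = 2 + n by omega, pow_add, pow_two, Matrix.mulVec_mulVec]
    simp only [← Matrix.mul_assoc]
    rw [L1, Matrix.zero_mul, Matrix.zero_mulVec]

lemma key2 (c w1 w2 : ℂ) (n : ℕ) :
    Bmᵀ.mulVec ((Zm w1 w2).mulVec (((Amᵀ * Zm w1 w2) ^ n).mulVec (c • ![0, 0, 1, 0]))) = 0 := by
  match n with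
  | 0 =>
    rw [pow_zero, Matrix.one_mulVec, Bmt]
    funext i
    fin_cases i <;>
      simp [-mul_eq_zero, Zm, P1, P2, Matrix.mulVec, Matrix.mul_apply,
        dotProduct, Fin.sum_univ_succ] <;> ring
  | 1 =>
    rw [pow_one, Bmt, Amt]
    funext i
    fin_cases i <;>
      simp [-mul_eq_zero, Zm, P1, P2, Matrix.mulVec, Matrix.mul_apply,
        dotProduct, Fin.sum_univ_succ] <;> ring
  | (n + 2) =>
    rw [show n + 2 = 2 + n by omega, pow_add, pow_two]
    simp only [Matrix.mulVec_mulVec]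
    simp only [← Matrix.mul_assoc]
    rw [L2, Matrix.zero_mul, Matrix.zero_mulVec]

lemma key3 (c z1 z2 : ℂ) (n : ℕ) :
    Cm.mulVec ((((Zm z1 z2 * Am) ^ n) * Zm z1 z2).mulVec (c • ![1, -1, 0, 0])) = 0 := by
  match n with
  | 0 =>
    rw [pow_zero, Matrix.one_mul]
    funext i
    fin_cases i <;>
      simp [-mul_eq_zero, Cm, Zm, P1, P2, Matrix.mulVec, Matrix.mul_apply,
        dotProduct, Fin.sum_univ_succ] <;> ring
  | 1 =>
    rw [pow_one]
    funext i
    fin_cases i <;>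
      simp [-mul_eq_zero, Cm, Zm, Am, P1, P2, Matrix.mulVec, Matrix.mul_apply,
        dotProduct, Fin.sum_univ_succ] <;> ring
  | (n + 2) =>
    rw [show n + 2 = 2 + n by omega, pow_add, pow_two, Matrix.mulVec_mulVec]
    simp only [← Matrix.mul_assoc]
    rw [L1, Matrix.zero_mul, Matrix.zero_mul, Matrix.zero_mulVec]

lemma key4 (c z1 z2 : ℂ) (n : ℕ) :
    Bmᵀ.mulVec (((Zm z1 z2 * Amᵀ) ^ n).mulVec (c • ![1, -1, 0, 0])) = 0 := by
  match n with
  | 0 =>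
    rw [pow_zero, Matrix.one_mulVec, Bmt]
    funext i
    fin_cases i <;>
      simp [-mul_eq_zero, Matrix.mulVec, dotProduct, Fin.sum_univ_succ] <;> ring
  | 1 =>
    rw [pow_one, Bmt, Amt]
    funext i
    fin_cases i <;>
      simp [-mul_eq_zero, Zm, P1, P2, Matrix.mulVec, Matrix.mul_apply,
        dotProduct, Fin.sum_univ_succ] <;> ring
  | (n + 2) =>
    rw [show n + 2 = 2 + n by omega, pow_add, pow_two, Matrix.mulVec_mulVec]
    simp only [← Matrix.mul_assoc]
    rw [L4, Matrix.zero_mul, Matrix.zero_mulVec]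

lemma hv1 : P1.mulVec Bvec = ((Real.sqrt 2 : ℂ))⁻¹ • ![1, 0, 0, 0] := by
  funext i
  fin_cases i <;>
    simp [P1, Bvec, Bm, Matrix.mulVec, dotProduct, Fin.sum_univ_succ,
      Matrix.vecHead, Matrix.vecTail] <;> ring

lemma hv2 : P2.mulVec Bvec = ((Real.sqrt 2 : ℂ))⁻¹ • ![0, 1, 0, 0] := by
  funext i
  fin_cases i <;>
    simp [P2, Bvec, Bm, Matrix.mulVec, dotProduct, Fin.sum_univ_succ,
      Matrix.vecHead, Matrix.vecTail] <;> ring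

lemma hv3 : Am.mulVec (P1.mulVec Bvec) = (2 : ℂ)⁻¹ • ![0, 0, -1, 1] := by
  rw [hv1, ← sqrt2_inv_mul_inv]
  funext i
  fin_cases i <;>
    simp [Am, Matrix.mulVec, dotProduct, Fin.sum_univ_succ,
      Matrix.vecHead, Matrix.vecTail] <;> ring

lemma hCvec : Cvec = ![0, 0, 0, 1] := by
  funext i
  fin_cases i <;> simp [Cvec, Cm]

theorem closely_connected_not_strictly_closely_connected :
    Submodule.span ℂ
        ({P1.mulVec Bvec, P2.mulVec Bvec, Am.mulVec (P1.mulVec Bvec), Cvec} :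
          Set (Fin 4 → ℂ)) = ⊤ ∧
    ({h : Fin 4 → ℂ | ∀ (z1 z2 : ℂ) (n : ℕ),
        Cm.mulVec (((Zm z1 z2 * Am) ^ n).mulVec h) = 0} ∩
      {h : Fin 4 → ℂ | ∀ z1 z2 : ℂ, z1 * z2 ≠ 0 → ∀ n : ℕ,
        (Bmᵀ).mulVec ((Wm z1 z2).mulVec (((Amᵀ * Wm z1 z2) ^ n).mulVec h)) = 0}
      = Set.range (fun c : ℂ => c • ![0, 0, 1, 0]) ∧
      (![0, 0, 1, 0] : Fin 4 → ℂ) ≠ 0) ∧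
    ({h : Fin 4 → ℂ | ∀ (z1 z2 : ℂ) (n : ℕ),
        Cm.mulVec ((((Zm z1 z2 * Am) ^ n) * Zm z1 z2).mulVec h) = 0} ∩
      {h : Fin 4 → ℂ | ∀ (z1 z2 : ℂ) (n : ℕ),
        (Bmᵀ).mulVec (((Zm z1 z2 * Amᵀ) ^ n).mulVec h) = 0}
      = Set.range (fun c : ℂ => c • ![1, -1, 0, 0]) ∧
      (![1, -1, 0, 0] : Fin 4 → ℂ) ≠ 0) := by
  refine ⟨?_, ⟨?_, ?_⟩, ⟨?_, ?_⟩⟩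
  · -- (i) span is everything
    set S := Submodule.span ℂ
        ({P1.mulVec Bvec, P2.mulVec Bvec, Am.mulVec (P1.mulVec Bvec), Cvec} :
          Set (Fin 4 → ℂ)) with hS
    have g1 : P1.mulVec Bvec ∈ S := Submodule.subset_span (by simp)
    have g2 : P2.mulVec Bvec ∈ S := Submodule.subset_span (by simp)
    have g3 : Am.mulVec (P1.mulVec Bvec) ∈ S := Submodule.subset_span (by simp)
    have g4 : Cvec ∈ S := Submodule.subset_span (by simp)
    have m1 : (![1, 0, 0, 0] : Fin 4 → ℂ) ∈ S := by
      have e : (![1, 0, 0, 0] : Fin 4 → ℂ) = ((Real.sqrt 2 : ℂ)) • P1.mulVec Bvec := by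
        rw [hv1, smul_smul, mul_inv_cancel₀ sqrt2_ne, one_smul]
      rw [e]; exact S.smul_mem _ g1
    have m2 : (![0, 1, 0, 0] : Fin 4 → ℂ) ∈ S := by
      have e : (![0, 1, 0, 0] : Fin 4 → ℂ) = ((Real.sqrt 2 : ℂ)) • P2.mulVec Bvec := by
        rw [hv2, smul_smul, mul_inv_cancel₀ sqrt2_ne, one_smul]
      rw [e]; exact S.smul_mem _ g2
    have m4 : (![0, 0, 0, 1] : Fin 4 → ℂ) ∈ S := by rw [← hCvec]; exact g4
    have m3 : (![0, 0, 1, 0] : Fin 4 → ℂ) ∈ S := by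
      have e : (![0, 0, 1, 0] : Fin 4 → ℂ)
          = ![0, 0, 0, 1] - (2 : ℂ) • Am.mulVec (P1.mulVec Bvec) := by
        rw [hv3, smul_smul]
        funext i
        fin_cases i <;> norm_num
      rw [e]
      exact S.sub_mem m4 (S.smul_mem _ g3)
    rw [eq_top_iff]
    rintro x -
    have hx : x = x 0 • ![1, 0, 0, 0] + x 1 • ![0, 1, 0, 0]
        + x 2 • ![0, 0, 1, 0] + x 3 • ![0, 0, 0, 1] := by
      funext i
      fin_cases i <;> simp
    rw [hx]
    exact S.add_mem (S.add_mem (S.add_mem (S.smul_mem _ m1) (S.smul_mem _ m2))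
      (S.smul_mem _ m3)) (S.smul_mem _ m4)
  · -- (ii) set equality
    ext h
    constructor
    · rintro ⟨f, -⟩
      have e3 : h 3 = 0 := by
        have h' := f 0 0 0
        rw [pow_zero, Matrix.one_mulVec] at h'
        have := congrFun h' 0
        simpa [Cm, Matrix.mulVec, dotProduct, Fin.sum_univ_succ] using this
      have e0 : h 0 = 0 := by
        have h' := f 0 1 1
        rw [pow_one] at h'
        have := congrFun h' 0
        simpa [Cm, Zm, Am, P1, P2, Matrix.mulVec, Matrix.mul_apply,
          dotProduct, Fin.sum_univ_succ, sqrt2_inv_ne] using this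
      have e1 : h 1 = 0 := by
        have h' := f 1 0 1
        rw [pow_one] at h'
        have := congrFun h' 0
        simpa [Cm, Zm, Am, P1, P2, Matrix.mulVec, Matrix.mul_apply,
          dotProduct, Fin.sum_univ_succ, sqrt2_inv_ne] using this
      exact ⟨h 2, by funext i; fin_cases i <;> simp [e0, e1, e3]⟩
    · rintro ⟨c, rfl⟩
      exact ⟨fun z1 z2 n => key1 c z1 z2 n, fun z1 z2 _ n => key2 c z1⁻¹ z2⁻¹ n⟩
  · -- (ii) vector nonzero
    intro hcontra
    have := congrFun hcontra 2
    simp at this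
  · -- (iii) set equality
    ext h
    constructor
    · rintro ⟨f1, f2⟩
      have e23 : (2 : ℂ)⁻¹ * h 2 + (2 : ℂ)⁻¹ * h 3 = 0 := by
        have h' := f1 1 0 0
        rw [pow_zero, Matrix.one_mul] at h'
        have := congrFun h' 0
        simpa [Cm, Zm, P1, P2, Matrix.mulVec, Matrix.mul_apply,
          dotProduct, Fin.sum_univ_succ] using this
      have e3 : h 3 = 0 := by
        have h' := f1 1 1 0
        rw [pow_zero, Matrix.one_mul] at h'
        have := congrFun h' 0
        simpa [Cm, Zm, P1, P2, Matrix.mulVec, Matrix.mul_apply,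
          dotProduct, Fin.sum_univ_succ] using this
      have e2 : h 2 = 0 := by
        have e := e23
        rw [e3] at e
        field_simp at e
        simpa using e
      have e01 : h 1 = -h 0 := by
        have h' := f2 0 0 0
        rw [pow_zero, Matrix.one_mulVec, Bmt] at h'
        have h'' := congrFun h' 0
        simp [-mul_eq_zero, Matrix.mulVec, dotProduct, Fin.sum_univ_succ] at h''
        have h3 : (((Real.sqrt 2 : ℝ) : ℂ))⁻¹ * (h 0 + h 1) = 0 := by linear_combination h''
        have h4 := (mul_eq_zero.mp h3).resolve_left sqrt2_inv_ne
        linear_combination h4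
      refine ⟨h 0, ?_⟩
      funext i
      fin_cases i <;> simp [e01, e2, e3]
    · rintro ⟨c, rfl⟩
      exact ⟨fun z1 z2 n => key3 c z1 z2 n, fun z1 z2 n => key4 c z1 z2 n⟩
  · -- (iii) vector nonzero
    intro hcontra
    have := congrFun hcontra 0
    simp at this
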